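/- Let μ > 0, let f : E → ℝ be μ-strongly star-convex with respect to a global minimizer x* and have L₂-Lipschitz-continuous second derivative, let M₂ ≥ L₂, let x ∈ E, and let x⁺ be a Cubic Regularized Newton step from x with parameter M₂ (a basic tensor step with p = 2). Then for every α ∈ [0,1] satisfying α²·((M₂+L₂)/3)·‖x − x*‖ + μα − μ ≤ 0, one has f(x⁺) − f(x*) ≤ (1 − α)·(f(x) − f(x*)). Moreover, if ‖x − x*‖ > 0 and κ = (M₂+L₂)·‖x − x*‖/(3μ), then this condition (and hence the contraction) holds for every α ∈ [0, α*] with α* = (−1 + √(1 + 4κ))/(2κ). -/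

import Mathlib

open scoped RealInnerProductSpace

section
variable {E : Type*} [NormedAddCommGroup E] [InnerProductSpace ℝ E]

/-- `f` is `μ`-uniformly star-convex of degree `q` with respect to `xs`. -/
def UniformlyStarConvex (f : E → ℝ) (xs : E) (q : ℕ) (μ : ℝ) : Prop :=
  ∀ x : E, ∀ α : ℝ, 0 ≤ α → α ≤ 1 →
    f (α • x + (1 - α) • xs) ≤
      α * f x + (1 - α) * f xs - α * (1 - α) * μ / q * ‖x - xs‖ ^ q

/-- `f` has `L`-Lipschitz-continuous `p`-th derivative. -/
def HasLipschitzDeriv (f : E → ℝ) (p : ℕ) (L : ℝ) : Prop :=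
  ContDiff ℝ p f ∧
    ∀ x y : E, ‖iteratedFDeriv ℝ p f x - iteratedFDeriv ℝ p f y‖ ≤ L * ‖x - y‖

/-- The `p`-th order Taylor polynomial `Φ_{x,p}(y)` of `f` at `x`. -/
noncomputable def taylorPoly (f : E → ℝ) (p : ℕ) (x y : E) : ℝ :=
  f x + ∑ k ∈ Finset.Icc 1 p,
    (1 / (Nat.factorial k : ℝ)) * iteratedFDeriv ℝ k f x (fun _ => y - x)

/-- The tensor model `Ω_{x,M}(y)`. -/
noncomputable def tensorModel (f : E → ℝ) (p : ℕ) (M : ℝ) (x y : E) : ℝ :=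
  taylorPoly f p x y + M / (Nat.factorial (p + 1) : ℝ) * ‖y - x‖ ^ (p + 1)

/-- `xp` is a basic `p`-th order tensor step from `x` with parameter `M`
(a global minimizer of the model). -/
def IsTensorStep (f : E → ℝ) (p : ℕ) (M : ℝ) (x xp : E) : Prop :=
  ∀ y : E, tensorModel f p M x xp ≤ tensorModel f p M x y

end


section Aux
open Set
variable {E : Type*} [NormedAddCommGroup E] [InnerProductSpace ℝ E]

private lemma taylor2_bound (f : E → ℝ) {L : ℝ} (hf : ContDiff ℝ 2 f)
    (hLip : ∀ u v : E, ‖iteratedFDeriv ℝ 2 f u - iteratedFDeriv ℝ 2 f v‖ ≤ L * ‖u - v‖)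
    (x y : E) :
    |f y - (f x + fderiv ℝ f x (y - x) +
      fderiv ℝ (fderiv ℝ f) x (y - x) (y - x) / 2)| ≤ L / 6 * ‖y - x‖ ^ 3 := by
  set h := y - x with hh
  have hdf : Differentiable ℝ f := hf.differentiable (by norm_num)
  have hdf' : Differentiable ℝ (fderiv ℝ f) :=
    (hf.fderiv_right (m := 1) (by norm_num)).differentiable (by norm_num)
  set c : ℝ → E := fun t => x + t • h with hc_def
  have hc : ∀ t : ℝ, HasDerivAt c h t := by
    intro t
    have := ((hasDerivAt_id t).smul_const h).const_add x
    rw [one_smul] at this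
    exact this
  -- pointwise second-derivative Lipschitz bound
  have key : ∀ u v : E,
      |fderiv ℝ (fderiv ℝ f) u h h - fderiv ℝ (fderiv ℝ f) v h h| ≤ L * ‖u - v‖ * ‖h‖ ^ 2 := by
    intro u v
    have e1 : fderiv ℝ (fderiv ℝ f) u h h = iteratedFDeriv ℝ 2 f u (fun _ => h) := by
      rw [iteratedFDeriv_two_apply]
    have e2 : fderiv ℝ (fderiv ℝ f) v h h = iteratedFDeriv ℝ 2 f v (fun _ => h) := by
      rw [iteratedFDeriv_two_apply]
    rw [e1, e2]
    have e3 : iteratedFDeriv ℝ 2 f u (fun _ => h) - iteratedFDeriv ℝ 2 f v (fun _ => h)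
        = (iteratedFDeriv ℝ 2 f u - iteratedFDeriv ℝ 2 f v) (fun _ => h) := by
      simp
    calc |iteratedFDeriv ℝ 2 f u (fun _ => h) - iteratedFDeriv ℝ 2 f v (fun _ => h)|
        = ‖(iteratedFDeriv ℝ 2 f u - iteratedFDeriv ℝ 2 f v) (fun _ : Fin 2 => h)‖ := by
          rw [← e3]; rfl
      _ ≤ ‖iteratedFDeriv ℝ 2 f u - iteratedFDeriv ℝ 2 f v‖ * ∏ _i : Fin 2, ‖h‖ :=
          (iteratedFDeriv ℝ 2 f u - iteratedFDeriv ℝ 2 f v).le_opNorm _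
      _ ≤ L * ‖u - v‖ * ‖h‖ ^ 2 := by
          have : (∏ _i : Fin 2, ‖h‖) = ‖h‖ ^ 2 := by simp [Finset.prod_const]
          rw [this]
          exact mul_le_mul_of_nonneg_right (hLip u v) (by positivity)
  -- derivative computations
  have hg2 : ∀ t : ℝ, HasDerivAt (fun t => fderiv ℝ f (c t) h)
      (fderiv ℝ (fderiv ℝ f) (c t) h h) t := by
    intro t
    have hA : HasDerivAt (fun t => fderiv ℝ f (c t)) (fderiv ℝ (fderiv ℝ f) (c t) h) t :=
      (hdf' (c t)).hasFDerivAt.comp_hasDerivAt t (hc t)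
    simpa using hA.clm_apply (hasDerivAt_const t h)
  set K1 : ℝ := fderiv ℝ f x h with hK1
  set K2 : ℝ := fderiv ℝ (fderiv ℝ f) x h h with hK2
  set χ : ℝ → ℝ := fun t => fderiv ℝ f (c t) h - K1 - t * K2 with hχdef
  have hχ : ∀ t : ℝ, HasDerivAt χ (fderiv ℝ (fderiv ℝ f) (c t) h h - K2) t := by
    intro t
    have := ((hg2 t).sub_const K1).sub (hasDerivAt_mul_const K2)
    exact this
  have hc0 : c 0 = x := by simp [hc_def]
  have hnormct : ∀ t ∈ Ico (0:ℝ) 1, ‖c t - x‖ = t * ‖h‖ := by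
    intro t ht
    have : c t - x = t • h := by simp [hc_def]
    rw [this, norm_smul, Real.norm_eq_abs, abs_of_nonneg ht.1]
  -- first fencing: |χ t| ≤ L‖h‖³/2 * t²
  have step1 : ∀ t ∈ Icc (0:ℝ) 1, ‖χ t‖ ≤ L * ‖h‖ ^ 3 / 2 * t ^ 2 := by
    have hB : ∀ t : ℝ, HasDerivAt (fun t => L * ‖h‖ ^ 3 / 2 * t ^ 2) (L * ‖h‖ ^ 3 * t) t := by
      intro t
      have := (hasDerivAt_pow 2 t).const_mul (L * ‖h‖ ^ 3 / 2)
      refine this.congr_deriv ?_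
      push_cast; ring
    intro t ht
    refine image_norm_le_of_norm_deriv_right_le_deriv_boundary
      (fun t _ => (hχ t).continuousAt.continuousWithinAt)
      (fun t _ => (hχ t).hasDerivWithinAt) ?_ hB ?_ ht
    · simp [hχdef, hc0, hK1]
    · intro t ht
      have := key (c t) x
      rw [hnormct t ht] at this
      have h2 : L * (t * ‖h‖) * ‖h‖ ^ 2 = L * ‖h‖ ^ 3 * t := by ring
      rw [Real.norm_eq_abs]
      calc |fderiv ℝ (fderiv ℝ f) (c t) h h - K2| ≤ L * (t * ‖h‖) * ‖h‖ ^ 2 := this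
        _ = L * ‖h‖ ^ 3 * t := h2
  -- φ and second fencing
  set φ : ℝ → ℝ := fun t => f (c t) - f x - t * K1 - t ^ 2 * K2 / 2 with hφdef
  have hφ : ∀ t : ℝ, HasDerivAt φ (χ t) t := by
    intro t
    have h1 : HasDerivAt (fun t => f (c t)) (fderiv ℝ f (c t) h) t :=
      (hdf (c t)).hasFDerivAt.comp_hasDerivAt t (hc t)
    have h3 : HasDerivAt (fun t : ℝ => t ^ 2 * K2 / 2) (t * K2) t := by
      have := ((hasDerivAt_pow 2 t).mul_const K2).div_const 2
      refine this.congr_deriv ?_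
      push_cast; ring
    have := ((h1.sub_const (f x)).sub (hasDerivAt_mul_const K1)).sub h3
    exact this
  have step2 : ‖φ 1‖ ≤ L * ‖h‖ ^ 3 / 6 * 1 ^ 3 := by
    have hB : ∀ t : ℝ, HasDerivAt (fun t => L * ‖h‖ ^ 3 / 6 * t ^ 3) (L * ‖h‖ ^ 3 / 2 * t ^ 2) t := by
      intro t
      have := (hasDerivAt_pow 3 t).const_mul (L * ‖h‖ ^ 3 / 6)
      refine this.congr_deriv ?_
      push_cast; ring
    refine image_norm_le_of_norm_deriv_right_le_deriv_boundary
      (f := φ) (a := 0) (b := 1)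
      (fun t _ => (hφ t).continuousAt.continuousWithinAt)
      (fun t _ => (hφ t).hasDerivWithinAt) ?_ hB ?_ (right_mem_Icc.mpr zero_le_one)
    · simp [hφdef, hc0]
    · intro t ht
      exact step1 t (Ico_subset_Icc_self ht)
  have hc1 : c 1 = y := by simp [hc_def, hh]
  have hφ1 : φ 1 = f y - (f x + K1 + K2 / 2) := by
    simp [hφdef, hc1]; ring
  rw [Real.norm_eq_abs, hφ1] at step2
  calc |f y - (f x + fderiv ℝ f x h + fderiv ℝ (fderiv ℝ f) x h h / 2)|
      = |f y - (f x + K1 + K2 / 2)| := by rw [hK1, hK2]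
    _ ≤ L * ‖h‖ ^ 3 / 6 * 1 ^ 3 := step2
    _ = L / 6 * ‖h‖ ^ 3 := by ring


private lemma taylorPoly_two (f : E → ℝ) (x y : E) :
    taylorPoly f 2 x y = f x + fderiv ℝ f x (y - x) +
      fderiv ℝ (fderiv ℝ f) x (y - x) (y - x) / 2 := by
  have hIcc : Finset.Icc 1 2 = ({1, 2} : Finset ℕ) := rfl
  rw [taylorPoly, hIcc, Finset.sum_insert (by decide), Finset.sum_singleton]
  rw [iteratedFDeriv_two_apply]
  simp [Nat.factorial]
  ring

private lemma tensorModel_two (f : E → ℝ) (M : ℝ) (x y : E) :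
    tensorModel f 2 M x y = taylorPoly f 2 x y + M / 6 * ‖y - x‖ ^ 3 := by
  rw [tensorModel]
  norm_num [Nat.factorial]

private lemma step_le (f : E → ℝ) {L M : ℝ} (hf : HasLipschitzDeriv f 2 L) (hM : L ≤ M)
    {x xp : E} (hstep : IsTensorStep f 2 M x xp) (y : E) :
    f xp ≤ f y + (M + L) / 6 * ‖y - x‖ ^ 3 := by
  have tb : ∀ z : E, |f z - taylorPoly f 2 x z| ≤ L / 6 * ‖z - x‖ ^ 3 := by
    intro z
    rw [taylorPoly_two]
    exact taylor2_bound f hf.1 hf.2 x z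
  have h1 := abs_le.mp (tb xp)
  have h2 := abs_le.mp (tb y)
  have h3 := hstep y
  rw [tensorModel_two, tensorModel_two] at h3
  have h4 : (0:ℝ) ≤ ‖xp - x‖ ^ 3 := by positivity
  have h5 : (0:ℝ) ≤ ‖y - x‖ ^ 3 := by positivity
  nlinarith [h1.1, h1.2, h2.1, h2.2]

end Aux

theorem cubic_newton_contraction {E : Type*} [NormedAddCommGroup E]
    [InnerProductSpace ℝ E] [FiniteDimensional ℝ E]
    (f : E → ℝ) (xs : E) (μ L M : ℝ) (hμ : 0 < μ)
    (hmin : ∀ y : E, f xs ≤ f y)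
    (hsc : UniformlyStarConvex f xs 2 μ)
    (hf : HasLipschitzDeriv f 2 L) (hM : L ≤ M)
    (x xp : E) (hstep : IsTensorStep f 2 M x xp) :
    (∀ α : ℝ, 0 ≤ α → α ≤ 1 →
        α ^ 2 * ((M + L) / 3) * ‖x - xs‖ + μ * α - μ ≤ 0 →
        f xp - f xs ≤ (1 - α) * (f x - f xs)) ∧
      (0 < ‖x - xs‖ →
        ∀ α : ℝ, 0 ≤ α →
          α ≤ (-1 + Real.sqrt (1 + 4 * ((M + L) * ‖x - xs‖ / (3 * μ)))) /
              (2 * ((M + L) * ‖x - xs‖ / (3 * μ))) →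
          f xp - f xs ≤ (1 - α) * (f x - f xs)) := by
  set r := ‖x - xs‖ with hr_def
  have hr0 : 0 ≤ r := norm_nonneg _
  have main : ∀ α : ℝ, 0 ≤ α → α ≤ 1 →
      α ^ 2 * ((M + L) / 3) * r + μ * α - μ ≤ 0 →
      f xp - f xs ≤ (1 - α) * (f x - f xs) := by
    intro α hα0 hα1 hcond
    have hy := step_le f hf hM hstep ((1 - α) • x + α • xs)
    have hnorm : ‖((1 - α) • x + α • xs) - x‖ = α * r := by
      have he : ((1 - α) • x + α • xs) - x = α • (xs - x) := by module
      rw [he, norm_smul, Real.norm_eq_abs, abs_of_nonneg hα0, norm_sub_rev, hr_def]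
    rw [hnorm] at hy
    have hsc' := hsc x (1 - α) (by linarith) (by linarith)
    rw [show (1:ℝ) - (1 - α) = α from by ring] at hsc'
    push_cast at hsc'
    rw [show ‖x - xs‖ = r from rfl] at hsc'
    have hprod : (α ^ 2 * ((M + L) / 3) * r + μ * α - μ) * (α * r ^ 2 / 2) ≤ 0 :=
      mul_nonpos_of_nonpos_of_nonneg hcond (by positivity)
    nlinarith [hy, hsc', hprod]
  refine ⟨main, ?_⟩
  intro hr α hα0 hαle
  have hL0 : 0 ≤ L := by
    have h0 : (0:ℝ) ≤ L * ‖x - xs‖ := le_trans (norm_nonneg _) (hf.2 x xs)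
    nlinarith
  have hML : 0 ≤ M + L := by linarith
  set κ := (M + L) * r / (3 * μ) with hκ_def
  have hκ0 : 0 ≤ κ := div_nonneg (mul_nonneg hML hr0) (by linarith)
  have hκμ : ∀ β : ℝ, β ^ 2 * ((M + L) / 3) * r + μ * β - μ = μ * (κ * β ^ 2 + β - 1) := by
    intro β
    rw [hκ_def]
    field_simp
  rcases eq_or_lt_of_le hκ0 with hκz | hκpos
  · have hαstar : (-1 + Real.sqrt (1 + 4 * κ)) / (2 * κ) = 0 := by
      rw [← hκz]
      norm_num
    rw [hαstar] at hαle
    have hαz : α = 0 := le_antisymm hαle hα0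
    subst hαz
    apply main 0 le_rfl zero_le_one
    rw [hκμ]
    nlinarith
  · set s := Real.sqrt (1 + 4 * κ) with hs_def
    have hs0 : 0 ≤ s := Real.sqrt_nonneg _
    have hs2 : s ^ 2 = 1 + 4 * κ := Real.sq_sqrt (by linarith)
    have h2κα : α * (2 * κ) ≤ -1 + s := by
      rw [div_eq_mul_inv] at hαle
      calc α * (2 * κ) ≤ ((-1 + s) * (2 * κ)⁻¹) * (2 * κ) :=
            mul_le_mul_of_nonneg_right hαle (by linarith)
        _ = -1 + s := by field_simp
    have hs1 : 1 ≤ s := by nlinarith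
    have hα1 : α ≤ 1 := by nlinarith [sq_nonneg (s - (1 + 2 * κ))]
    apply main α hα0 hα1
    rw [hκμ]
    have hfac : (2 * κ * α + 1 - s) * (2 * κ * α + 1 + s) ≤ 0 :=
      mul_nonpos_of_nonpos_of_nonneg (by linarith)
        (by nlinarith [mul_nonneg hκ0 hα0])
    have hle : κ * α ^ 2 + α - 1 ≤ 0 := by nlinarith [hfac, hs2, hκpos]
    nlinarith
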